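/- Let A be a semigeneric tournament with parts A₁,…,A_k and let ∼ be its canonical equivalence relation. If A is saturated (∼ has exactly k·2^{k-1} classes), then the quotient A/∼ is saturated as well. -/
import Mathlib


/-- Indicator of a proposition (classically). -/
noncomputable def eInd (p : Prop) : ℕ := @ite ℕ p (Classical.propDecidable p) 1 0

/-- A semigeneric tournament: an ω-partite tournament (vertices `V`, parts indexed by
`part : V → P`, exactly one directed edge between vertices in distinct parts, no edges
within a part) such that for every pair of parts `X`, `Y`, and all `a ≠ b ∈ X`,
`c ≠ d ∈ Y`, the number of edges directed from `{a,b}` to `{c,d}` is even. -/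
structure Semigeneric (V : Type*) (P : Type*) where
  part : V → P
  E : V → V → Prop
  not_edge_same : ∀ u v, part u = part v → ¬ E u v
  total : ∀ u v, part u ≠ part v → E u v ∨ E v u
  asymm : ∀ u v, E u v → ¬ E v u
  even : ∀ a b c d, a ≠ b → c ≠ d → part a = part b → part c = part d →
    part a ≠ part c →
    Even (eInd (E a c) + eInd (E a d) + eInd (E b c) + eInd (E b d))

/-- The canonical equivalence: `x ∼ y` iff `x, y` lie in the same part and are connected
in the same direction to every vertex outside that part. -/
def canSim {V P : Type*} (T : Semigeneric V P) (x y : V) : Prop :=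
  T.part x = T.part y ∧ ∀ w, T.part w ≠ T.part x → (T.E x w ↔ T.E y w)

theorem stmt10 {V : Type*} [Finite V] (k : ℕ) (T : Semigeneric V (Fin k))
    (hsurj : Function.Surjective T.part)
    (s : Setoid V) (hs : ∀ x y, s.r x y ↔ canSim T x y)
    (T' : Semigeneric (Quotient s) (Fin k))
    (hpart : ∀ u, T'.part (Quotient.mk s u) = T.part u)
    (hE : ∀ u v, ¬ canSim T u v →
      (T'.E (Quotient.mk s u) (Quotient.mk s v) ↔ T.E u v))
    (s' : Setoid (Quotient s)) (hs' : ∀ x y, s'.r x y ↔ canSim T' x y)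
    (hsat : Nat.card (Quotient s) = k * 2 ^ (k - 1)) :
    Nat.card (Quotient s') = k * 2 ^ (k - 1) := by
  -- Key: `canSim T'` on the quotient is just equality.
  have key : ∀ x y : Quotient s, canSim T' x y → x = y := by
    intro x y h
    obtain ⟨u, rfl⟩ := Quotient.exists_rep x
    obtain ⟨v, rfl⟩ := Quotient.exists_rep y
    obtain ⟨hp, hw⟩ := h
    rw [hpart, hpart] at hp
    apply Quotient.sound
    refine (hs u v).mpr ⟨hp, fun w hwne => ?_⟩
    have h1 : ¬ canSim T u w := fun hc => hwne (hc.1.symm)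
    have h2 : ¬ canSim T v w := fun hc => hwne (hp ▸ hc.1.symm)
    have h3 : T'.part (Quotient.mk s w) ≠ T'.part (Quotient.mk s u) := by
      rw [hpart, hpart]; exact hwne
    rw [← hE u w h1, ← hE v w h2]
    exact hw _ h3
  -- So `s'` is equality, and the quotient map is a bijection.
  have hbij : Function.Bijective (Quotient.mk s') := by
    constructor
    · intro x y hxy
      exact key x y ((hs' x y).mp (Quotient.exact hxy))
    · exact Quotient.exists_rep
  rw [← Nat.card_eq_of_bijective _ hbij]
  exact hsat
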